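/- Let Z ∈ ℝ^{d×B} be a matrix whose B columns all have unit Euclidean norm, and let ε > 0. Then L_TCR(Z) ≥ −(d/2)·log(1 + 1/ε²), and equality holds if and only if (1/B)ZZᵀ = (1/d)I_d. In other words, the global and unique minimizer of the TCR loss under the unit-norm-column constraint is achieved exactly when (1/B)ZZᵀ = (1/d)I_d. -/

import Mathlib

open Matrix MeasureTheory

/-- Principal matrix logarithm of a real symmetric matrix, defined via the spectral
decomposition by applying `Real.log` to the eigenvalues (junk value `0` otherwise). -/
noncomputable def matrixLog {n : Type*} [Fintype n] [DecidableEq n]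
    (A : Matrix n n ℝ) : Matrix n n ℝ :=
  if hA : A.IsHermitian then
    (hA.eigenvectorUnitary : Matrix n n ℝ) * Matrix.diagonal (Real.log ∘ hA.eigenvalues) *
      star (hA.eigenvectorUnitary : Matrix n n ℝ)
  else 0

/-- Matrix KL divergence `MKL(P‖Q) = tr(P log P − P log Q − P + Q)`. -/
noncomputable def MKL {n : Type*} [Fintype n] [DecidableEq n]
    (P Q : Matrix n n ℝ) : ℝ :=
  (P * matrixLog P - P * matrixLog Q - P + Q).trace

/-- Matrix cross-entropy `MCE(P, Q) = tr(−P log Q + Q)`. -/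
noncomputable def MCE {n : Type*} [Fintype n] [DecidableEq n]
    (P Q : Matrix n n ℝ) : ℝ :=
  (-(P * matrixLog Q) + Q).trace

/-- Effective rank of a symmetric matrix (junk value `0` if not Hermitian), defined as the
exponential of the Shannon entropy of the normalized eigenvalue distribution; note that
`Real.log 0 = 0` in Mathlib, implementing the convention `0 · log 0 = 0`. -/
noncomputable def erank {n : Type*} [Fintype n] [DecidableEq n]
    (A : Matrix n n ℝ) : ℝ :=
  if hA : A.IsHermitian then
    Real.exp (-∑ i, (hA.eigenvalues i / ∑ k, hA.eigenvalues k) *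
      Real.log (hA.eigenvalues i / ∑ k, hA.eigenvalues k))
  else 0

/-- Total coding rate loss `L_TCR(Z) = −(1/2)·log det(I_d + (d/(Bε²))·ZZᵀ)`. -/
noncomputable def LTCR {d B : ℕ} (ε : ℝ) (Z : Matrix (Fin d) (Fin B) ℝ) : ℝ :=
  -(1 / 2) * Real.log ((1 + ((d : ℝ) / (B * ε ^ 2)) • (Z * Zᵀ)).det)

/-- For `Z ∈ ℝ^{d×B}` with unit-norm columns and `ε > 0`,
`L_TCR(Z) ≥ −(d/2)·log(1 + 1/ε²)`, with equality iff `(1/B)ZZᵀ = (1/d)I_d`;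
i.e. the TCR loss is uniquely minimized exactly at `(1/B)ZZᵀ = (1/d)I_d`. -/

-- per-term tangent-line bound for log
lemma log_tangent {c m x : ℝ} (hc : 0 < c) (hm : 0 ≤ m) (hx : 0 ≤ x) :
    Real.log (1 + c * x) ≤ Real.log (1 + c * m) + c * (x - m) / (1 + c * m) ∧
      (x ≠ m → Real.log (1 + c * x) < Real.log (1 + c * m) + c * (x - m) / (1 + c * m)) := by
  have hxp : 0 < 1 + c * x := by nlinarith
  have hmp : 0 < 1 + c * m := by nlinarith
  set a : ℝ := (1 + c * x) / (1 + c * m) with ha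
  have hap : 0 < a := div_pos hxp hmp
  have hlog : Real.log a = Real.log (1 + c * x) - Real.log (1 + c * m) :=
    Real.log_div (ne_of_gt hxp) (ne_of_gt hmp)
  have hsub : a - 1 = c * (x - m) / (1 + c * m) := by
    rw [ha, div_sub_one (ne_of_gt hmp)]; congr 1; ring
  constructor
  · have := Real.log_le_sub_one_of_pos hap
    rw [hlog, hsub] at this; linarith
  · intro hxm
    have hane : a ≠ 1 := by
      rw [ha]
      intro h
      rw [div_eq_one_iff_eq (ne_of_gt hmp)] at h
      have : c * x = c * m := by linarith
      exact hxm (mul_left_cancel₀ (ne_of_gt hc) this)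
    have := Real.log_lt_sub_one_of_pos hap hane
    rw [hlog, hsub] at this; linarith

lemma sum_log_bound {n : ℕ} (μ : Fin n → ℝ) (hμ : ∀ i, 0 ≤ μ i) {c m : ℝ}
    (hc : 0 < c) (hm : 0 ≤ m) (hsum : ∑ i, μ i = n * m) :
    ∑ i, Real.log (1 + c * μ i) ≤ n * Real.log (1 + c * m) ∧
      ((∑ i, Real.log (1 + c * μ i) = n * Real.log (1 + c * m)) ↔ ∀ i, μ i = m) := by
  set g : Fin n → ℝ := fun i => Real.log (1 + c * m) + c * (μ i - m) / (1 + c * m) with hg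
  have hgsum : ∑ i, g i = n * Real.log (1 + c * m) := by
    simp only [hg, Finset.sum_add_distrib, Finset.sum_const, Finset.card_univ, Fintype.card_fin,
      nsmul_eq_mul, ← Finset.sum_div, ← Finset.mul_sum]
    rw [Finset.sum_sub_distrib, hsum]
    simp
  have hle : ∀ i, Real.log (1 + c * μ i) ≤ g i := fun i => (log_tangent hc hm (hμ i)).1
  have hS : ∑ i, Real.log (1 + c * μ i) ≤ n * Real.log (1 + c * m) := by
    rw [← hgsum]; exact Finset.sum_le_sum fun i _ => hle i
  refine ⟨hS, ⟨fun h => ?_, fun h => ?_⟩⟩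
  · by_contra hne
    push_neg at hne
    obtain ⟨j, hj⟩ := hne
    have : ∑ i, Real.log (1 + c * μ i) < ∑ i, g i :=
      Finset.sum_lt_sum (fun i _ => hle i) ⟨j, Finset.mem_univ j, (log_tangent hc hm (hμ j)).2 hj⟩
    rw [hgsum] at this; linarith
  · simp [h]

theorem tcr_min {d B : ℕ} (hd : 0 < d) (hB : 0 < B)
    (Z : Matrix (Fin d) (Fin B) ℝ) (hZ : ∀ j, ∑ i, (Z i j) ^ 2 = 1)
    (ε : ℝ) (hε : 0 < ε) :
    -((d : ℝ) / 2) * Real.log (1 + 1 / ε ^ 2) ≤ LTCR ε Z ∧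
      (LTCR ε Z = -((d : ℝ) / 2) * Real.log (1 + 1 / ε ^ 2) ↔
        (B : ℝ)⁻¹ • (Z * Zᵀ) = (d : ℝ)⁻¹ • 1) := by
  classical
  have hd' : (0:ℝ) < d := Nat.cast_pos.mpr hd
  have hB' : (0:ℝ) < B := Nat.cast_pos.mpr hB
  have hε2 : (0:ℝ) < ε ^ 2 := by positivity
  set c : ℝ := (d : ℝ) / (B * ε ^ 2) with hc
  have hcpos : 0 < c := by positivity
  set m : ℝ := (B : ℝ) / d with hmdef
  have hmpos : 0 < m := by positivity
  have hcm : 1 + c * m = 1 + 1 / ε ^ 2 := by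
    rw [hc, hmdef]; field_simp
  -- matrix setup
  have hZT : Zᵀ = Zᴴ := by
    ext i j; simp [Matrix.conjTranspose_apply]
  have hPSD : (Z * Zᵀ).PosSemidef := by rw [hZT]; exact Matrix.posSemidef_self_mul_conjTranspose Z
  have hA : (Z * Zᵀ).IsHermitian := hPSD.isHermitian
  set U : Matrix (Fin d) (Fin d) ℝ := (hA.eigenvectorUnitary : Matrix (Fin d) (Fin d) ℝ) with hUdef
  have hU1 : U * star U = 1 := (Matrix.mem_unitaryGroup_iff).mp hA.eigenvectorUnitary.2
  have hU2 : star U * U = 1 := (Matrix.mem_unitaryGroup_iff').mp hA.eigenvectorUnitary.2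
  have hspec : Z * Zᵀ = U * Matrix.diagonal hA.eigenvalues * star U := by
    have h := hA.spectral_theorem
    simpa using h
  have hμ0 : ∀ i, 0 ≤ hA.eigenvalues i := fun i => hPSD.eigenvalues_nonneg i
  -- trace
  have htr1 : (Z * Zᵀ).trace = ∑ i, hA.eigenvalues i := by
    conv_lhs => rw [hspec]
    rw [Matrix.trace_mul_cycle, hU2, one_mul, Matrix.trace_diagonal]
  have htr2 : (Z * Zᵀ).trace = B := by
    simp only [Matrix.trace, Matrix.diag, Matrix.mul_apply, Matrix.transpose_apply]
    rw [Finset.sum_comm]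
    simp [← sq, hZ]
  have hsum : ∑ i, hA.eigenvalues i = d * m := by
    rw [← htr1, htr2, hmdef]; field_simp
  -- determinant
  have hdet : (1 + c • (Z * Zᵀ)).det = ∏ i, (1 + c * hA.eigenvalues i) := by
    have h1 : 1 + c • (Z * Zᵀ) = U * Matrix.diagonal (fun i => 1 + c * hA.eigenvalues i) * star U := by
      conv_lhs => rw [hspec]
      have : Matrix.diagonal (fun i => 1 + c * hA.eigenvalues i)
          = 1 + c • Matrix.diagonal hA.eigenvalues := by
        rw [← Matrix.diagonal_one, ← Matrix.diagonal_smul, ← Matrix.diagonal_add]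
        rfl
      rw [this, Matrix.mul_add, Matrix.add_mul, Matrix.mul_one, hU1, Matrix.mul_smul,
        Matrix.smul_mul]
    rw [h1, Matrix.det_mul_right_comm, hU1, one_mul, Matrix.det_diagonal]
  have hterm_pos : ∀ i, (0:ℝ) < 1 + c * hA.eigenvalues i := by
    intro i; nlinarith [hμ0 i]
  -- log of LTCR
  have hLTCR : LTCR ε Z = -(1/2) * ∑ i, Real.log (1 + c * hA.eigenvalues i) := by
    rw [LTCR, ← hc, hdet, Real.log_prod (fun i _ => ne_of_gt (hterm_pos i))]
  have key := sum_log_bound hA.eigenvalues hμ0 hcpos (le_of_lt hmpos) hsum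
  have hRHS : -((d : ℝ) / 2) * Real.log (1 + 1 / ε ^ 2)
      = -(1/2) * ((d : ℝ) * Real.log (1 + c * m)) := by
    rw [hcm]; ring
  constructor
  · rw [hLTCR, hRHS]
    have := key.1
    linarith
  · rw [hLTCR, hRHS]
    constructor
    · intro h
      have hSeq : ∑ i, Real.log (1 + c * hA.eigenvalues i)
          = (d : ℝ) * Real.log (1 + c * m) := by linarith
      have hall : ∀ i, hA.eigenvalues i = m := key.2.mp hSeq
      have hdiag : Matrix.diagonal hA.eigenvalues = m • (1 : Matrix (Fin d) (Fin d) ℝ) := by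
        rw [Matrix.smul_one_eq_diagonal]
        exact congrArg Matrix.diagonal (funext hall)
      have hAeq : Z * Zᵀ = m • (1 : Matrix (Fin d) (Fin d) ℝ) := by
        rw [hspec, hdiag, Matrix.mul_smul, Matrix.smul_mul, Matrix.mul_one, hU1]
      rw [hAeq, smul_smul]
      congr 1
      rw [hmdef]; field_simp
    · intro h
      have hAeq : Z * Zᵀ = m • (1 : Matrix (Fin d) (Fin d) ℝ) := by
        have h2 := congrArg (fun M => (B : ℝ) • M) h
        simp only [smul_smul] at h2
        rw [mul_inv_cancel₀ (ne_of_gt hB'), one_smul] at h2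
        rw [h2]
        congr 1
      have h1 : 1 + c • (Z * Zᵀ) = (1 + c * m) • (1 : Matrix (Fin d) (Fin d) ℝ) := by
        rw [hAeq, smul_smul, add_smul, one_smul]
      have : ∑ i, Real.log (1 + c * hA.eigenvalues i)
          = Real.log ((1 + c • (Z * Zᵀ)).det) := by
        rw [hdet, Real.log_prod (fun i _ => ne_of_gt (hterm_pos i))]
      rw [this, h1, Matrix.det_smul, Matrix.det_one, mul_one, Fintype.card_fin, Real.log_pow]
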